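/- Let R be a (q,s) chain ring, N ≥ n, and let X ∈ R^{n×m} and Y₁, Y₂ ∈ R^{N×m} be matrices such that the row spans of X, Y₁, and Y₂ are all equal as submodules of R^m. For j = 1,2 let 𝒜_j = {A ∈ R^{N×n} : A has rank n and AX = Y_j}. Then 𝒜₁ and 𝒜₂ are nonempty and |𝒜₁| = |𝒜₂|. -/

import Mathlib

open scoped BigOperators

section ChainRingDefs

variable {R : Type*} [CommRing R]

/-- For a shape `μ = (μ₁,…,μ_s)` (0-indexed as `μ : Fin s → ℕ`), the exponent of `π`
governing the `j`-th coordinate (0-indexed) of the module `R^μ`: the number of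
components of `μ` that are `≤ j`. -/
def shapeExp {s : ℕ} (μ : Fin s → ℕ) (j : ℕ) : ℕ :=
  (Finset.univ.filter fun i : Fin s => μ i ≤ j).card

/-- The last (largest) component `μ_s` of a shape (for monotone `μ`). -/
def shapeLast {s : ℕ} (μ : Fin s → ℕ) : ℕ := Finset.univ.sup μ

/-- The module `R^μ = ⟨1⟩^{μ₁} × ⟨π⟩^{μ₂−μ₁} × ⋯ × ⟨π^{s−1}⟩^{μ_s−μ_{s−1}}`,
realized as a submodule of `R^{μ_s}`. -/
def shapeModule (R : Type*) [CommRing R] (π : R) {s : ℕ} (μ : Fin s → ℕ) :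
    Submodule R (Fin (shapeLast μ) → R) :=
  Submodule.pi Set.univ fun j => Ideal.span {π ^ shapeExp μ (j : ℕ)}

/-- The module `M` has shape `μ`, i.e. `M ≅ R^μ`. -/
def HasShape (R : Type*) [CommRing R] (π : R) {s : ℕ} (μ : Fin s → ℕ)
    (M : Type*) [AddCommGroup M] [Module R M] : Prop :=
  Nonempty (M ≃ₗ[R] shapeModule R π μ)

/-- The row span of a matrix: the submodule of `R^m` generated by its rows. -/
def rowSpan (R : Type*) [CommRing R] {n m : ℕ} (A : Matrix (Fin n) (Fin m) R) :
    Submodule R (Fin m → R) :=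
  Submodule.span R (Set.range fun i => A i)

-- The degree of `a ∈ R`: the unique `l` with `a ∈ ⟨π^l⟩ \ ⟨π^{l+1}⟩` for `a ≠ 0`,
-- and `s` for `a = 0`.
open Classical in
noncomputable def degR (π : R) (s : ℕ) (a : R) : ℕ :=
  if a = 0 then s else sSup {l : ℕ | a ∈ Ideal.span {π ^ l}}

/-- `j` is the pivot position of the row `r`: the earliest entry among the entries of
least degree in that row. -/
def IsPivotIdx (π : R) (s : ℕ) {m : ℕ} (r : Fin m → R) (j : Fin m) : Prop :=
  (∀ k, degR π s (r j) ≤ degR π s (r k)) ∧ ∀ k, k < j → degR π s (r j) < degR π s (r k)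

/-- `V` is a complete set of residues modulo `π` containing `0`. -/
def IsCompleteResidues (π : R) (V : Set R) : Prop :=
  0 ∈ V ∧ ∀ a : R, ∃! v, v ∈ V ∧ a - v ∈ Ideal.span {π}

/-- The set `R(R,π^l) = {Σ_{i<l} a_i π^i : a_i ∈ V}` of residues modulo `π^l`. -/
def residueSet (π : R) (V : Set R) (l : ℕ) : Set R :=
  {x | ∃ a : Fin l → R, (∀ i, a i ∈ V) ∧ x = ∑ i, a i * π ^ (i : ℕ)}

/-- The matrix `A` is in row canonical form (with respect to the residue set `V`). -/
def IsRCF (π : R) (s : ℕ) (V : Set R) {n m : ℕ} (A : Matrix (Fin n) (Fin m) R) : Prop :=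
  -- (1) nonzero rows lie above zero rows
  (∀ i i' : Fin n, i < i' → A i' ≠ 0 → A i ≠ 0) ∧
  -- (2) pivots of smaller degree lie above pivots of larger degree; among pivots of
  -- equal degree, earlier pivots lie above later ones
  (∀ i i' : Fin n, ∀ j j' : Fin m, i < i' → A i ≠ 0 → A i' ≠ 0 →
      IsPivotIdx π s (A i) j → IsPivotIdx π s (A i') j' →
      degR π s (A i j) ≤ degR π s (A i' j') ∧
        (degR π s (A i j) = degR π s (A i' j') → j ≤ j')) ∧
  -- (3) every pivot equals `π^l` for some `0 ≤ l ≤ s-1`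
  (∀ i : Fin n, ∀ j : Fin m, A i ≠ 0 → IsPivotIdx π s (A i) j →
      degR π s (A i j) < s ∧ A i j = π ^ degR π s (A i j)) ∧
  -- (4) entries below a pivot in its column are zero; entries above lie in `R(R,π^l)`
  (∀ i : Fin n, ∀ j : Fin m, A i ≠ 0 → IsPivotIdx π s (A i) j →
      (∀ i' : Fin n, i < i' → A i' j = 0) ∧
      (∀ i' : Fin n, i' < i → A i' j ∈ residueSet π V (degR π s (A i j))))

/-- For a shape `κ` (0-indexed) and `i : Fin s`, the previous component `κ_{i-1}`
(`0` when `i = 0`); with the paper's 1-indexed convention this is `κ_i` for the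
0-indexed position `i` (whose 1-indexed position is `i+1`). -/
def prevVal {s : ℕ} (κ : Fin s → ℕ) (i : Fin s) : ℕ :=
  if (i : ℕ) = 0 then 0
  else κ ⟨(i : ℕ) - 1, lt_of_le_of_lt (Nat.sub_le _ _) i.isLt⟩

end ChainRingDefs

lemma mem_rowSpan_row {R : Type*} [CommRing R] {n m : ℕ} (A : Matrix (Fin n) (Fin m) R)
    (i : Fin n) : A i ∈ rowSpan R A :=
  Submodule.subset_span ⟨i, rfl⟩

open Submodule Module in
lemma field_step {k : Type*} [Field k] {n N : ℕ} (hnN : n ≤ N)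
    (K : Submodule k (Fin n → k)) (A : Matrix (Fin N) (Fin n) k)
    (hA : rowSpan k A ⊔ K = ⊤) :
    ∃ B : Matrix (Fin N) (Fin n) k, (∀ i, B i - A i ∈ K) ∧ rowSpan k B = ⊤ := by
  suffices H : ∀ d (A : Matrix (Fin N) (Fin n) k),
      n - finrank k (rowSpan k A) ≤ d → rowSpan k A ⊔ K = ⊤ →
      ∃ B, (∀ i, B i - A i ∈ K) ∧ rowSpan k B = ⊤ from H _ A le_rfl hA
  clear hA A
  intro d
  induction d with
  | zero =>
    intro A hd hA
    refine ⟨A, fun i => by simp, ?_⟩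
    by_contra htop
    have h1 : finrank k (rowSpan k A) < n := by
      have := Submodule.finrank_lt htop
      rwa [Module.finrank_fin_fun] at this
    omega
  | succ d ih =>
    intro A hd hA
    by_cases htop : rowSpan k A = ⊤
    · exact ⟨A, fun i => by simp, htop⟩
    have hrk : finrank k (rowSpan k A) < n := by
      have := Submodule.finrank_lt (Ne.intro htop)
      rwa [Module.finrank_fin_fun] at this
    -- u ∈ K \ rowSpan A
    have hKle : ¬ K ≤ rowSpan k A := fun h => htop (by rw [← hA, sup_eq_left.mpr h])
    obtain ⟨u, huK, huA⟩ := SetLike.not_le_iff_exists.mp hKle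
    -- a row in the span of the others
    have hni : ¬ LinearIndependent k (fun i => A i) := by
      intro hli
      have hcard := hli.fintype_card_le_finrank
      rw [Fintype.card_fin, Module.finrank_fin_fun] at hcard
      have hNn : N = n := le_antisymm hcard hnN
      subst hNn
      exact htop (hli.span_eq_top_of_card_eq_finrank'
        (by rw [Fintype.card_fin, Module.finrank_fin_fun]))
    rw [linearIndependent_iff_notMem_span] at hni
    push_neg at hni
    obtain ⟨i, hi⟩ := hni
    set B₀ : Matrix (Fin N) (Fin n) k := A.updateRow i (A i + u) with hB₀
    have hrow_ne : ∀ j, j ≠ i → B₀ j = A j := fun j hj => A.updateRow_ne hj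
    have hrow_i : B₀ i = A i + u := A.updateRow_self
    have hAi_mem : A i ∈ rowSpan k B₀ := by
      refine Submodule.span_le.mpr ?_ hi
      rintro x ⟨j, ⟨hj, hji⟩, rfl⟩
      show A j ∈ (rowSpan k B₀ : Set _)
      rw [← hrow_ne j (by simpa using hji)]
      exact mem_rowSpan_row B₀ j
    have hu_mem : u ∈ rowSpan k B₀ := by
      have := sub_mem (mem_rowSpan_row B₀ i) hAi_mem
      rwa [hrow_i, add_sub_cancel_left] at this
    have hspan : rowSpan k B₀ = rowSpan k A ⊔ span k {u} := by
      apply le_antisymm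
      · rw [rowSpan, Submodule.span_le]
        rintro x ⟨j, rfl⟩
        show B₀ j ∈ (rowSpan k A ⊔ span k {u} : Submodule k _)
        by_cases hj : j = i
        · subst hj; rw [hrow_i]
          exact add_mem (Submodule.mem_sup_left (mem_rowSpan_row A j))
            (Submodule.mem_sup_right (subset_span rfl))
        · rw [hrow_ne j hj]
          exact Submodule.mem_sup_left (mem_rowSpan_row A j)
      · refine sup_le ?_ ?_
        · rw [rowSpan, Submodule.span_le]
          rintro x ⟨j, rfl⟩
          show A j ∈ (rowSpan k B₀ : Set _)
          by_cases hj : j = i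
          · subst hj; exact hAi_mem
          · rw [← hrow_ne j hj]; exact mem_rowSpan_row B₀ j
        · rw [Submodule.span_le, Set.singleton_subset_iff]
          exact hu_mem
    have hlt : rowSpan k A < rowSpan k B₀ := by
      rw [hspan]
      refine lt_of_le_of_ne le_sup_left fun h => huA ?_
      rw [h]
      exact Submodule.mem_sup_right (subset_span rfl)
    have hfr : finrank k (rowSpan k A) < finrank k (rowSpan k B₀) :=
      Submodule.finrank_lt_finrank_of_lt hlt
    have hsup : rowSpan k B₀ ⊔ K = ⊤ := by
      rw [hspan, sup_assoc, sup_eq_right.mpr (span_le.mpr (Set.singleton_subset_iff.mpr huK)), hA]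
    obtain ⟨B, hBK, hBtop⟩ := ih B₀ (by omega) hsup
    refine ⟨B, fun j => ?_, hBtop⟩
    have : B j - A j = (B j - B₀ j) + (B₀ j - A j) := by ring
    rw [this]
    refine add_mem (hBK j) ?_
    by_cases hj : j = i
    · subst hj; rw [hrow_i]; simpa using huK
    · rw [hrow_ne j hj]; simp

open Matrix in
lemma rowSpan_eq_range_vecMulLinear {R : Type*} [CommRing R] {n m : ℕ}
    (A : Matrix (Fin n) (Fin m) R) : rowSpan R A = LinearMap.range A.vecMulLinear := by
  rw [range_vecMulLinear]; rfl

open IsLocalRing Matrix in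
lemma exists_fullRowSpan_transfer {R : Type*} [CommRing R] [Fintype R] [IsLocalRing R]
    {n N m : ℕ} (hnN : n ≤ N) (X : Matrix (Fin n) (Fin m) R) (Y : Matrix (Fin N) (Fin m) R)
    (hXY : rowSpan R X = rowSpan R Y) :
    ∃ A : Matrix (Fin N) (Fin n) R, rowSpan R A = ⊤ ∧ A * X = Y := by
  classical
  set k := ResidueField R
  set f : R →+* k := residue R with hf
  -- reduction of vectors
  let red : ∀ {t : ℕ}, (Fin t → R) → (Fin t → k) := fun {t} w j => f (w j)
  have red_vecMul : ∀ {t t' : ℕ} (u : Fin t → R) (A : Matrix (Fin t) (Fin t') R),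
      red (u ᵥ* A) = (red u) ᵥ* (A.map f) := by
    intro t t' u A
    funext j
    simp [red, Matrix.vecMul, dotProduct, map_sum, _root_.map_mul]
  -- Step A: a preliminary transfer matrix
  have hYrows : ∀ i, ∃ v : Fin n → R, v ᵥ* X = Y i := by
    intro i
    have h : Y i ∈ rowSpan R X := hXY ▸ mem_rowSpan_row Y i
    rw [rowSpan_eq_range_vecMulLinear] at h
    obtain ⟨v, hv⟩ := h
    exact ⟨v, hv⟩
  choose v hv using hYrows
  set A₀ : Matrix (Fin N) (Fin n) R := Matrix.of v with hA₀def
  have hA₀ : A₀ * X = Y := by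
    ext i j
    have := congrFun (hv i) j
    simpa [Matrix.mul_apply, Matrix.vecMul, dotProduct, hA₀def] using this
  -- the kernel of right multiplication by X
  set K : Submodule R (Fin n → R) := LinearMap.ker X.vecMulLinear with hK
  have memK : ∀ w, w ∈ K ↔ w ᵥ* X = 0 := by
    intro w; rw [hK, LinearMap.mem_ker, Matrix.vecMulLinear_apply]
  -- its reduction
  set Kbar : Submodule k (Fin n → k) :=
    { carrier := red '' (K : Set (Fin n → R))
      add_mem' := by
        rintro a b ⟨a', ha', rfl⟩ ⟨b', hb', rfl⟩
        exact ⟨a' + b', add_mem ha' hb', by funext j; simp [red]⟩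
      zero_mem' := ⟨0, zero_mem _, by funext j; simp [red]⟩
      smul_mem' := by
        rintro c x ⟨x', hx', rfl⟩
        obtain ⟨r, rfl⟩ := residue_surjective c
        exact ⟨r • x', K.smul_mem r hx', by funext j; simp [red, _root_.map_mul, hf]⟩ } with hKbar
  -- the reduced matrix has row span complementing Kbar
  have hC1 : rowSpan k (A₀.map f) ⊔ Kbar = ⊤ := by
    rw [eq_top_iff]
    intro wb _
    obtain ⟨w, hw⟩ : ∃ w : Fin n → R, red w = wb := by
      have h := fun j => residue_surjective (R := R) (wb j)
      choose w hw using h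
      exact ⟨w, funext hw⟩
    have hmem : w ᵥ* X ∈ rowSpan R Y := by
      rw [← hXY, rowSpan_eq_range_vecMulLinear]
      exact ⟨w, rfl⟩
    rw [rowSpan_eq_range_vecMulLinear] at hmem
    obtain ⟨u, hu⟩ := hmem
    rw [Matrix.vecMulLinear_apply, ← hA₀, ← Matrix.vecMul_vecMul] at hu
    set a : Fin n → R := u ᵥ* A₀ with ha
    have hz : w - a ∈ K := by
      rw [memK, Matrix.sub_vecMul, hu, sub_self]
    have : wb = red a + red (w - a) := by
      rw [← hw]; funext j; simp [red, map_sub]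
    rw [this]
    refine add_mem (Submodule.mem_sup_left ?_) (Submodule.mem_sup_right ⟨w - a, hz, rfl⟩)
    rw [rowSpan_eq_range_vecMulLinear]
    exact ⟨red u, by rw [Matrix.vecMulLinear_apply, ha, red_vecMul]⟩
  obtain ⟨B, hBK, hBtop⟩ := field_step hnN Kbar (A₀.map f) hC1
  -- lift the correction rows
  have hlift : ∀ i, ∃ z ∈ K, red z = B i - (A₀.map f) i := fun i => hBK i
  choose z hzK hzred using hlift
  refine ⟨A₀ + Matrix.of z, ?_, ?_⟩
  · -- full row span via Nakayama
    have hmap : (A₀ + Matrix.of z).map f = B := by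
      ext i j
      have := congrFun (hzred i) j
      simp only [Matrix.map_apply, Matrix.add_apply, map_add]
      simp only [red, Pi.sub_apply, Matrix.map_apply] at this
      rw [Matrix.of_apply, this]; ring
    have hle : (⊤ : Submodule R (Fin n → R)) ≤
        rowSpan R (A₀ + Matrix.of z) ⊔ (maximalIdeal R) • ⊤ := by
      intro w _
      have hwb : red w ∈ rowSpan k B := hBtop ▸ Submodule.mem_top
      rw [rowSpan_eq_range_vecMulLinear] at hwb
      obtain ⟨vb, hvb⟩ := hwb
      obtain ⟨v', hv'⟩ : ∃ v' : Fin N → R, red v' = vb := by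
        have h := fun j => residue_surjective (R := R) (vb j)
        choose v' hv' using h
        exact ⟨v', funext hv'⟩
      rw [Matrix.vecMulLinear_apply] at hvb
      have hdiff : ∀ j, (w - v' ᵥ* (A₀ + Matrix.of z)) j ∈ maximalIdeal R := by
        intro j
        rw [← Ideal.Quotient.eq_zero_iff_mem]
        have : red (w - v' ᵥ* (A₀ + Matrix.of z)) = 0 := by
          have := red_vecMul v' (A₀ + Matrix.of z)
          rw [hmap, hv', hvb] at this
          funext j'
          simp only [red, map_sub, Pi.sub_apply]
          have h2 := congrFun this j'
          simp only [red] at h2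
          rw [h2]
          simp
        exact congrFun this j
      have hmem2 : w - v' ᵥ* (A₀ + Matrix.of z) ∈ (maximalIdeal R) • (⊤ : Submodule R (Fin n → R)) := by
        have hsum : w - v' ᵥ* (A₀ + Matrix.of z) =
            ∑ j, ((w - v' ᵥ* (A₀ + Matrix.of z)) j) • (Pi.single j 1 : Fin n → R) := by
          funext j'
          simp [Pi.single_apply, Finset.sum_ite_eq']
        rw [hsum]
        exact Submodule.sum_mem _ fun j _ =>
          Submodule.smul_mem_smul (hdiff j) Submodule.mem_top
      have : w = v' ᵥ* (A₀ + Matrix.of z) + (w - v' ᵥ* (A₀ + Matrix.of z)) := by ring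
      rw [this]
      refine add_mem (Submodule.mem_sup_left ?_) (Submodule.mem_sup_right hmem2)
      rw [rowSpan_eq_range_vecMulLinear]
      exact ⟨v', rfl⟩
    have hfg : (⊤ : Submodule R (Fin n → R)).FG := Module.Finite.fg_top
    have hjac : maximalIdeal R ≤ Ideal.jacobson ⊥ :=
      (jacobson_eq_maximalIdeal (⊥ : Ideal R) bot_ne_top).ge
    have := Submodule.le_of_le_smul_of_le_jacobson_bot hfg hjac hle
    exact le_antisymm le_top this
  · -- transfer property
    rw [Matrix.add_mul, hA₀]
    have : (Matrix.of z) * X = 0 := by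
      ext i j
      have h := (memK (z i)).mp (hzK i)
      have := congrFun h j
      simpa [Matrix.mul_apply, Matrix.vecMul, dotProduct] using this
    rw [this, add_zero]

open Matrix in
lemma row_mul {R : Type*} [CommRing R] {N' N n : ℕ} (M : Matrix (Fin N') (Fin N) R)
    (A : Matrix (Fin N) (Fin n) R) (i : Fin N') : (M * A) i = M i ᵥ* A :=
  funext fun j => by simp [Matrix.mul_apply, Matrix.vecMul, dotProduct]

lemma rowSpan_mul_le {R : Type*} [CommRing R] {N' N n : ℕ} (M : Matrix (Fin N') (Fin N) R)
    (A : Matrix (Fin N) (Fin n) R) : rowSpan R (M * A) ≤ rowSpan R A := by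
  rw [rowSpan, Submodule.span_le]
  rintro x ⟨i, rfl⟩
  show (M * A) i ∈ (rowSpan R A : Set _)
  rw [row_mul, rowSpan_eq_range_vecMulLinear]
  exact ⟨M i, rfl⟩

lemma rowSpan_unit_mul {R : Type*} [CommRing R] {N n : ℕ} {U U' : Matrix (Fin N) (Fin N) R}
    (h : U' * U = 1) (A : Matrix (Fin N) (Fin n) R) : rowSpan R (U * A) = rowSpan R A := by
  refine le_antisymm (rowSpan_mul_le U A) ?_
  have hA : A = U' * (U * A) := by rw [← Matrix.mul_assoc, h, Matrix.one_mul]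
  conv_lhs => rw [hA]
  exact rowSpan_mul_le U' (U * A)

open Matrix in
lemma exists_unit_transfer {R : Type*} [CommRing R] [Fintype R] [IsLocalRing R] {N m : ℕ}
    (Y₁ Y₂ : Matrix (Fin N) (Fin m) R) (h : rowSpan R Y₁ = rowSpan R Y₂) :
    ∃ U U' : Matrix (Fin N) (Fin N) R, U' * U = 1 ∧ U * U' = 1 ∧ U * Y₁ = Y₂ := by
  classical
  obtain ⟨U, hUtop, hUY⟩ := exists_fullRowSpan_transfer le_rfl Y₁ Y₂ h
  have hsurj : Function.Surjective U.vecMulLinear := by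
    rw [← LinearMap.range_eq_top, range_vecMulLinear]
    exact hUtop
  have : IsNoetherian R (Fin N → R) := isNoetherian_of_finite R _
  have hinj : Function.Injective U.vecMulLinear :=
    IsNoetherian.injective_of_surjective_endomorphism U.vecMulLinear hsurj
  set e := LinearEquiv.ofBijective U.vecMulLinear ⟨hinj, hsurj⟩ with he
  set U' : Matrix (Fin N) (Fin N) R :=
    Matrix.of (fun i => e.symm (Pi.single i 1)) with hU'
  have hU'U : U' * U = 1 := by
    ext i j
    have hrow : (U' * U) i = (U' i) ᵥ* U := row_mul U' U i
    have : (U' i) ᵥ* U = Pi.single i 1 := by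
      have h3 : U.vecMulLinear (e.symm (Pi.single i 1)) = Pi.single i 1 :=
        e.apply_symm_apply (Pi.single i 1)
      rw [Matrix.vecMulLinear_apply] at h3
      exact h3
    rw [hrow, this]
    simp [Matrix.one_apply, Pi.single_apply, eq_comm]
  exact ⟨U, U', hU'U, mul_eq_one_comm.mp hU'U, hUY⟩

open Submodule in
lemma hasShape_iff_rowSpan_top {R : Type*} [CommRing R] [Fintype R] (π : R) {s : ℕ} (hs : 0 < s)
    {N n : ℕ} (A : Matrix (Fin N) (Fin n) R) :
    HasShape R π (fun _ : Fin s => n) ↥(rowSpan R A) ↔ rowSpan R A = ⊤ := by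
  classical
  have hlast : shapeLast (fun _ : Fin s => n) = n := by
    have hne : (Finset.univ : Finset (Fin s)).Nonempty := ⟨⟨0, hs⟩, Finset.mem_univ _⟩
    simpa [shapeLast] using Finset.sup_const hne n
  have hmodtop : shapeModule R π (fun _ : Fin s => n) = ⊤ := by
    rw [eq_top_iff]
    intro x _
    rw [shapeModule, Submodule.mem_pi]
    intro j _
    have hexp : shapeExp (fun _ : Fin s => n) (j : ℕ) = 0 := by
      rw [shapeExp, Finset.card_eq_zero, Finset.filter_eq_empty_iff]
      intro i _
      have hj : (j : ℕ) < n := by have := j.isLt; omega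
      omega
    rw [hexp, pow_zero, Ideal.span_singleton_one]
    trivial
  constructor
  · rintro ⟨e⟩
    have hcard : Nat.card ↥(rowSpan R A) = Nat.card (Fin n → R) := by
      rw [Nat.card_congr e.toEquiv]
      have h1 : Nat.card ↥(shapeModule R π (fun _ : Fin s => n)) =
          Nat.card (Fin (shapeLast (fun _ : Fin s => n)) → R) := by
        rw [hmodtop]
        exact Nat.card_congr Submodule.topEquiv.toEquiv
      rw [h1, hlast]
    have htopadd : (rowSpan R A).toAddSubgroup = ⊤ :=
      AddSubgroup.eq_top_of_card_eq _ hcard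
    refine Submodule.eq_top_iff'.mpr fun x => ?_
    have hx : x ∈ (rowSpan R A).toAddSubgroup := htopadd ▸ AddSubgroup.mem_top x
    exact hx
  · intro h
    have e1 : ↥(rowSpan R A) ≃ₗ[R] (Fin n → R) :=
      (LinearEquiv.ofEq _ _ h).trans Submodule.topEquiv
    have e3 : (Fin n → R) ≃ₗ[R] (Fin (shapeLast (fun _ : Fin s => n)) → R) :=
      LinearEquiv.funCongrLeft R R (finCongr hlast)
    have e4 : (Fin (shapeLast (fun _ : Fin s => n)) → R) ≃ₗ[R]
        ↥(shapeModule R π (fun _ : Fin s => n)) :=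
      Submodule.topEquiv.symm.trans (LinearEquiv.ofEq _ _ hmodtop.symm)
    exact ⟨e1.trans (e3.trans e4)⟩


/-- If `X`, `Y₁`, `Y₂` have equal row spans, then the sets of full-rank transfer
matrices mapping `X` to `Y₁` resp. `Y₂` are nonempty and equinumerous. -/
theorem transfer_sets_equinumerous {R : Type*} [CommRing R] [Fintype R] [IsLocalRing R] [IsPrincipalIdealRing R]
    (q s : ℕ) (hs : 0 < s) (π : R)
    (hmax : IsLocalRing.maximalIdeal R = Ideal.span {π})
    (hnil : π ^ s = 0) (hnil' : π ^ (s - 1) ≠ 0)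
    (hq : Nat.card (IsLocalRing.ResidueField R) = q)
    {n N m : ℕ} (hnN : n ≤ N)
    (X : Matrix (Fin n) (Fin m) R) (Y₁ Y₂ : Matrix (Fin N) (Fin m) R)
    (h1 : rowSpan R X = rowSpan R Y₁) (h2 : rowSpan R X = rowSpan R Y₂) :
    {A : Matrix (Fin N) (Fin n) R |
        HasShape R π (fun _ : Fin s => n) ↥(rowSpan R A) ∧ A * X = Y₁}.Nonempty ∧
    {A : Matrix (Fin N) (Fin n) R |
        HasShape R π (fun _ : Fin s => n) ↥(rowSpan R A) ∧ A * X = Y₂}.Nonempty ∧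
    Nat.card {A : Matrix (Fin N) (Fin n) R |
        HasShape R π (fun _ : Fin s => n) ↥(rowSpan R A) ∧ A * X = Y₁} =
      Nat.card {A : Matrix (Fin N) (Fin n) R |
        HasShape R π (fun _ : Fin s => n) ↥(rowSpan R A) ∧ A * X = Y₂} := by
  classical
  obtain ⟨A₁, hA₁top, hA₁X⟩ := exists_fullRowSpan_transfer hnN X Y₁ h1
  obtain ⟨A₂, hA₂top, hA₂X⟩ := exists_fullRowSpan_transfer hnN X Y₂ h2
  obtain ⟨U, U', hU'U, hUU', hUY⟩ := exists_unit_transfer Y₁ Y₂ (h1.symm.trans h2)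
  have hU'Y : U' * Y₂ = Y₁ := by
    rw [← hUY, ← Matrix.mul_assoc, hU'U, Matrix.one_mul]
  refine ⟨⟨A₁, (hasShape_iff_rowSpan_top π hs A₁).mpr hA₁top, hA₁X⟩,
    ⟨A₂, (hasShape_iff_rowSpan_top π hs A₂).mpr hA₂top, hA₂X⟩, ?_⟩
  apply Nat.card_congr
  refine ⟨fun A => ⟨U * A.1, ?_, ?_⟩, fun A => ⟨U' * A.1, ?_, ?_⟩, ?_, ?_⟩
  · refine (hasShape_iff_rowSpan_top π hs _).mpr ?_
    rw [rowSpan_unit_mul hU'U]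
    exact (hasShape_iff_rowSpan_top π hs A.1).mp A.2.1
  · rw [Matrix.mul_assoc, A.2.2, hUY]
  · refine (hasShape_iff_rowSpan_top π hs _).mpr ?_
    rw [rowSpan_unit_mul hUU']
    exact (hasShape_iff_rowSpan_top π hs A.1).mp A.2.1
  · rw [Matrix.mul_assoc, A.2.2, hU'Y]
  · intro A
    apply Subtype.ext
    show U' * (U * A.1) = A.1
    rw [← Matrix.mul_assoc, hU'U, Matrix.one_mul]
  · intro A
    apply Subtype.ext
    show U * (U' * A.1) = A.1
    rw [← Matrix.mul_assoc, hUU', Matrix.one_mul]
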